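/- Let Z := (Z_1,...,Z_n) in B(Y) with joint spectral radius r(Z) < 1 and C ∈ B(H, Y). Then the controllability grammian G := ∑_{k=0}^∞ ∑_{|α|=k} Z_α C C* Z_α* converges in norm and satisfies the Lyapunov equation G = ∑_{i=1}^n Z_i G Z_i* + CC*. -/
import Mathlib

set_option maxHeartbeats 1000000

/-- `Z_α := Z_{i_1} ⋯ Z_{i_k}` for a word `α` in the free semigroup on `n`
generators (`Z_∅ = I`). -/
noncomputable def wordProd {H : Type*} [NormedAddCommGroup H] [NormedSpace ℂ H]
    {n : ℕ} (Z : Fin n → H →L[ℂ] H) (α : List (Fin n)) : H →L[ℂ] H :=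
  (α.map Z).prod

open ContinuousLinearMap Filter

section Aux

variable {Y H : Type*} [NormedAddCommGroup Y] [InnerProductSpace ℂ Y] [CompleteSpace Y]
  [NormedAddCommGroup H] [InnerProductSpace ℂ H] [CompleteSpace H]

local notation "⟪" x ", " y "⟫" => @inner ℂ _ _ x y

lemma aux_quad {ι : Type*} [Fintype ι] (A : ι → Y →L[ℂ] Y) (C : H →L[ℂ] Y) (x : Y) :
    ∑ α : ι, ‖adjoint C (adjoint (A α) x)‖ ^ 2 ≤
      (‖C‖ ^ 2 * ‖∑ α : ι, A α ∘L adjoint (A α)‖) * ‖x‖ ^ 2 := by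
  set W := ∑ α : ι, A α ∘L adjoint (A α) with hW
  have h1 : ∑ α : ι, ‖adjoint C (adjoint (A α) x)‖ ^ 2 ≤
      ‖C‖ ^ 2 * ∑ α : ι, ‖adjoint (A α) x‖ ^ 2 := by
    rw [Finset.mul_sum]
    refine Finset.sum_le_sum fun α _ => ?_
    have h := (adjoint C).le_opNorm (adjoint (A α) x)
    rw [ContinuousLinearMap.adjoint.norm_map C] at h
    nlinarith [norm_nonneg (adjoint C (adjoint (A α) x)), norm_nonneg C,
      norm_nonneg (adjoint (A α) x)]
  have h2 : ∑ α : ι, ‖adjoint (A α) x‖ ^ 2 = RCLike.re ⟪W x, x⟫ := by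
    rw [hW, ContinuousLinearMap.sum_apply, sum_inner, map_sum]
    refine Finset.sum_congr rfl fun α _ => ?_
    rw [ContinuousLinearMap.comp_apply,
      ← adjoint_inner_right (A α) ((adjoint (A α)) x) x, inner_self_eq_norm_sq]
  have h3 : RCLike.re ⟪W x, x⟫ ≤ ‖W‖ * ‖x‖ ^ 2 := by
    calc RCLike.re ⟪W x, x⟫ ≤ ‖W x‖ * ‖x‖ := re_inner_le_norm _ _
    _ ≤ (‖W‖ * ‖x‖) * ‖x‖ := by
        exact mul_le_mul_of_nonneg_right (W.le_opNorm x) (norm_nonneg x)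
    _ = ‖W‖ * ‖x‖ ^ 2 := by ring
  calc ∑ α : ι, ‖adjoint C (adjoint (A α) x)‖ ^ 2
      ≤ ‖C‖ ^ 2 * ∑ α : ι, ‖adjoint (A α) x‖ ^ 2 := h1
    _ ≤ (‖C‖ ^ 2 * ‖W‖) * ‖x‖ ^ 2 := by
        rw [h2, mul_assoc]; exact mul_le_mul_of_nonneg_left h3 (by positivity)

lemma aux_norm_le {ι : Type*} [Fintype ι] (A : ι → Y →L[ℂ] Y) (C : H →L[ℂ] Y) :
    ‖∑ α : ι, A α ∘L (C ∘L adjoint C) ∘L adjoint (A α)‖ ≤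
      ‖C‖ ^ 2 * ‖∑ α : ι, A α ∘L adjoint (A α)‖ := by
  set S := ∑ α : ι, A α ∘L (C ∘L adjoint C) ∘L adjoint (A α) with hS
  set W := ∑ α : ι, A α ∘L adjoint (A α) with hW
  set B := ‖C‖ ^ 2 * ‖W‖ with hB
  have hB0 : 0 ≤ B := by positivity
  have key : ∀ x y : Y, ‖⟪S x, y⟫‖ ≤ B * (‖x‖ * ‖y‖) := by
    intro x y
    have hSx : ⟪S x, y⟫ = ∑ α : ι, ⟪adjoint C (adjoint (A α) x), adjoint C (adjoint (A α) y)⟫ := by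
      rw [hS, ContinuousLinearMap.sum_apply, sum_inner]
      refine Finset.sum_congr rfl fun α _ => ?_
      simp only [ContinuousLinearMap.comp_apply]
      rw [← adjoint_inner_right (A α) (C ((adjoint C) ((adjoint (A α)) x))) y,
        ← adjoint_inner_right C ((adjoint C) ((adjoint (A α)) x)) ((adjoint (A α)) y)]
    rw [hSx]
    calc ‖∑ α : ι, ⟪adjoint C (adjoint (A α) x), adjoint C (adjoint (A α) y)⟫‖
        ≤ ∑ α : ι, ‖⟪adjoint C (adjoint (A α) x), adjoint C (adjoint (A α) y)⟫‖ :=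
          norm_sum_le _ _
      _ ≤ ∑ α : ι, ‖adjoint C (adjoint (A α) x)‖ * ‖adjoint C (adjoint (A α) y)‖ :=
          Finset.sum_le_sum fun α _ => norm_inner_le_norm _ _
      _ ≤ B * (‖x‖ * ‖y‖) := by
          have hcs := Finset.sum_mul_sq_le_sq_mul_sq Finset.univ
            (fun α : ι => ‖adjoint C (adjoint (A α) x)‖)
            (fun α : ι => ‖adjoint C (adjoint (A α) y)‖)
          have hx := aux_quad A C x
          have hy := aux_quad A C y
          have h0y : (0:ℝ) ≤ ∑ α : ι, ‖adjoint C (adjoint (A α) y)‖ ^ 2 := by positivity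
          have h0s : (0:ℝ) ≤ ∑ α : ι, ‖adjoint C (adjoint (A α) x)‖ *
              ‖adjoint C (adjoint (A α) y)‖ := by positivity
          have hPQ : (∑ α : ι, ‖adjoint C (adjoint (A α) x)‖ ^ 2) *
              (∑ α : ι, ‖adjoint C (adjoint (A α) y)‖ ^ 2) ≤
              (B * ‖x‖ ^ 2) * (B * ‖y‖ ^ 2) :=
            mul_le_mul hx hy h0y (mul_nonneg hB0 (sq_nonneg _))
          have hsq : (∑ α : ι, ‖adjoint C (adjoint (A α) x)‖ *
              ‖adjoint C (adjoint (A α) y)‖) ^ 2 ≤ (B * (‖x‖ * ‖y‖)) ^ 2 := by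
            nlinarith
          have ht0 : (0:ℝ) ≤ B * (‖x‖ * ‖y‖) :=
            mul_nonneg hB0 (mul_nonneg (norm_nonneg _) (norm_nonneg _))
          nlinarith
  refine opNorm_le_bound _ hB0 fun x => ?_
  rcases eq_or_lt_of_le (norm_nonneg (S x)) with h0 | h0
  · rw [← h0]; positivity
  · have h3 : ‖S x‖ * ‖S x‖ ≤ (B * ‖x‖) * ‖S x‖ := by
      calc ‖S x‖ * ‖S x‖ = RCLike.re ⟪S x, S x⟫ := (inner_self_eq_norm_mul_norm _).symm
        _ ≤ ‖(⟪S x, S x⟫ : ℂ)‖ := le_trans (le_abs_self _) (RCLike.abs_re_le_norm _)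
        _ ≤ B * (‖x‖ * ‖S x‖) := key x (S x)
        _ = (B * ‖x‖) * ‖S x‖ := by ring
    exact le_of_mul_le_mul_right h3 h0
lemma aux_succ {n k : ℕ} (Z : Fin n → Y →L[ℂ] Y) (M : Y →L[ℂ] Y) :
    ∑ α : Fin (k + 1) → Fin n,
        wordProd Z (List.ofFn α) ∘L M ∘L adjoint (wordProd Z (List.ofFn α)) =
      ∑ i, Z i ∘L (∑ α : Fin k → Fin n,
          wordProd Z (List.ofFn α) ∘L M ∘L adjoint (wordProd Z (List.ofFn α))) ∘L
        adjoint (Z i) := by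
  rw [← Equiv.sum_comp (Fin.consEquiv fun _ : Fin (k + 1) => Fin n)
      (fun α : Fin (k + 1) → Fin n =>
        wordProd Z (List.ofFn α) ∘L M ∘L adjoint (wordProd Z (List.ofFn α))),
    Fintype.sum_prod_type]
  refine Finset.sum_congr rfl fun i _ => ?_
  have hword : ∀ β : Fin k → Fin n,
      wordProd Z (List.ofFn ((Fin.consEquiv fun _ : Fin (k + 1) => Fin n) (i, β))) =
        Z i ∘L wordProd Z (List.ofFn β) := by
    intro β
    have : List.ofFn ((Fin.consEquiv fun _ : Fin (k + 1) => Fin n) (i, β)) =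
        i :: List.ofFn β := by
      rw [List.ofFn_succ]
      simp [Fin.consEquiv, Fin.cons_zero, Fin.cons_succ]
    rw [this]
    simp [wordProd, List.map_cons, List.prod_cons]
    rfl
  simp only [hword, adjoint_comp]
  simp only [← ContinuousLinearMap.mul_def]
  rw [Finset.sum_mul, Finset.mul_sum]
  exact Finset.sum_congr rfl fun β _ => by simp only [mul_assoc]

end Aux

/-- Let `Z := (Z_1,...,Z_n)` have joint spectral radius `r(Z) < 1` and `C ∈ B(H, Y)`.
Then the controllability grammian `G := ∑_k ∑_{|α|=k} Z_α C C* Z_α*` converges in norm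
and satisfies the Lyapunov equation `G = ∑_i Z_i G Z_i* + CC*`. -/
theorem grammian_converges_and_lyapunov
    {Y H : Type*} [NormedAddCommGroup Y] [InnerProductSpace ℂ Y] [CompleteSpace Y]
    [NormedAddCommGroup H] [InnerProductSpace ℂ H] [CompleteSpace H]
    {n : ℕ} (Z : Fin n → Y →L[ℂ] Y)
    (hsr : ∃ L : ℝ, L < 1 ∧
      Filter.Tendsto
        (fun k : ℕ =>
          ‖∑ α : Fin (k + 1) → Fin n,
              wordProd Z (List.ofFn α) ∘L
                ContinuousLinearMap.adjoint (wordProd Z (List.ofFn α))‖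
            ^ (1 / (2 * ((k : ℝ) + 1))))
        Filter.atTop (nhds L))
    (C : H →L[ℂ] Y) :
    ∃ G : Y →L[ℂ] Y,
      Filter.Tendsto
        (fun m : ℕ => ∑ k ∈ Finset.range m,
          ∑ α : Fin k → Fin n,
            wordProd Z (List.ofFn α) ∘L (C ∘L ContinuousLinearMap.adjoint C) ∘L
              ContinuousLinearMap.adjoint (wordProd Z (List.ofFn α)))
        Filter.atTop (nhds G) ∧
      G = (∑ i, Z i ∘L G ∘L ContinuousLinearMap.adjoint (Z i)) +
            C ∘L ContinuousLinearMap.adjoint C := by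
  obtain ⟨L, hL1, hLtend⟩ := hsr
  set S : ℕ → Y →L[ℂ] Y := fun k => ∑ α : Fin k → Fin n,
      wordProd Z (List.ofFn α) ∘L (C ∘L ContinuousLinearMap.adjoint C) ∘L
        ContinuousLinearMap.adjoint (wordProd Z (List.ofFn α)) with hSdef
  set W : ℕ → Y →L[ℂ] Y := fun k => ∑ α : Fin k → Fin n,
      wordProd Z (List.ofFn α) ∘L ContinuousLinearMap.adjoint (wordProd Z (List.ofFn α))
    with hWdef
  have hbound : ∀ k, ‖S k‖ ≤ ‖C‖ ^ 2 * ‖W k‖ := fun k =>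
    aux_norm_le (fun α : Fin k → Fin n => wordProd Z (List.ofFn α)) C
  have hL0 : 0 ≤ L :=
    ge_of_tendsto' hLtend fun k => Real.rpow_nonneg (norm_nonneg _) _
  set ρ := (L + 1) / 2 with hρdef
  have hLρ : L < ρ := by rw [hρdef]; linarith
  have hρ1 : ρ < 1 := by rw [hρdef]; linarith
  have hρ0 : 0 < ρ := by rw [hρdef]; linarith
  obtain ⟨N, hN⟩ := Filter.eventually_atTop.mp (hLtend.eventually_lt_const hLρ)
  have hWbound : ∀ k, N ≤ k → ‖W (k + 1)‖ ≤ ρ ^ (2 * (k + 1)) := by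
    intro k hk
    have ht0 : (0:ℝ) ≤ ‖W (k + 1)‖ := norm_nonneg _
    have he : (0:ℝ) < 2 * ((k : ℝ) + 1) := by positivity
    have h1 : ‖W (k + 1)‖ ^ (1 / (2 * ((k : ℝ) + 1))) ≤ ρ := (hN k hk).le
    have h2 : (‖W (k + 1)‖ ^ (1 / (2 * ((k : ℝ) + 1)))) ^ (2 * ((k : ℝ) + 1)) ≤
        ρ ^ (2 * ((k : ℝ) + 1)) :=
      Real.rpow_le_rpow (Real.rpow_nonneg ht0 _) h1 he.le
    have h3 : (‖W (k + 1)‖ ^ (1 / (2 * ((k : ℝ) + 1)))) ^ (2 * ((k : ℝ) + 1)) =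
        ‖W (k + 1)‖ := by
      rw [← Real.rpow_mul ht0, one_div, inv_mul_cancel₀ he.ne', Real.rpow_one]
    rw [h3] at h2
    calc ‖W (k + 1)‖ ≤ ρ ^ (2 * ((k : ℝ) + 1)) := h2
      _ = ρ ^ (((2 * (k + 1) : ℕ) : ℝ)) := by push_cast; ring_nf
      _ = ρ ^ (2 * (k + 1)) := Real.rpow_natCast ρ _
  have hsum : Summable S := by
    apply Summable.of_norm
    rw [← summable_nat_add_iff (N + 1)]
    have hgeo : Summable (fun j : ℕ => (‖C‖ ^ 2 * ρ ^ (2 * (N + 1))) * (ρ ^ 2) ^ j) :=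
      (summable_geometric_of_lt_one (by positivity) (by nlinarith)).mul_left _
    refine Summable.of_nonneg_of_le (fun _ => norm_nonneg _) (fun j => ?_) hgeo
    have hidx : j + (N + 1) = (j + N) + 1 := by omega
    have h1 : ‖S (j + (N + 1))‖ ≤ ‖C‖ ^ 2 * ‖W ((j + N) + 1)‖ := by
      rw [hidx]; exact hbound _
    have h2 : ‖W ((j + N) + 1)‖ ≤ ρ ^ (2 * ((j + N) + 1)) := hWbound _ (by omega)
    have hexp : ρ ^ (2 * ((j + N) + 1)) = ρ ^ (2 * (N + 1)) * (ρ ^ 2) ^ j := by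
      rw [← pow_mul, ← pow_add]
      congr 1
      omega
    calc ‖S (j + (N + 1))‖ ≤ ‖C‖ ^ 2 * ρ ^ (2 * ((j + N) + 1)) :=
        h1.trans (mul_le_mul_of_nonneg_left h2 (by positivity))
      _ = (‖C‖ ^ 2 * ρ ^ (2 * (N + 1))) * (ρ ^ 2) ^ j := by rw [hexp]; ring
  set G := ∑' k, S k with hGdef
  have hHas : HasSum S G := hsum.hasSum
  refine ⟨G, hHas.tendsto_sum_nat, ?_⟩
  have hrec : ∀ k, S (k + 1) =
      ∑ i, Z i ∘L S k ∘L ContinuousLinearMap.adjoint (Z i) := fun k =>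
    aux_succ Z (C ∘L ContinuousLinearMap.adjoint C)
  have hφ : ∀ i : Fin n,
      HasSum (fun k => Z i ∘L S k ∘L ContinuousLinearMap.adjoint (Z i))
        (Z i ∘L G ∘L ContinuousLinearMap.adjoint (Z i)) := by
    intro i
    exact ((ContinuousLinearMap.compL ℂ Y Y Y (Z i)).comp
      ((ContinuousLinearMap.compL ℂ Y Y Y).flip
        (ContinuousLinearMap.adjoint (Z i)))).hasSum hHas
  have h2 : HasSum (fun k => S (k + 1))
      (∑ i, Z i ∘L G ∘L ContinuousLinearMap.adjoint (Z i)) := by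
    have h := hasSum_sum (s := Finset.univ)
      (f := fun (i : Fin n) (k : ℕ) => Z i ∘L S k ∘L ContinuousLinearMap.adjoint (Z i))
      (a := fun i => Z i ∘L G ∘L ContinuousLinearMap.adjoint (Z i))
      (fun i _ => hφ i)
    have heq : (fun k : ℕ => ∑ i, Z i ∘L S k ∘L ContinuousLinearMap.adjoint (Z i)) =
        fun k => S (k + 1) := by
      funext k
      rw [hrec k]
    rwa [heq] at h
  have hS0 : S 0 = C ∘L ContinuousLinearMap.adjoint C := by
    show (∑ α : Fin 0 → Fin n,
        wordProd Z (List.ofFn α) ∘L (C ∘L ContinuousLinearMap.adjoint C) ∘L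
          ContinuousLinearMap.adjoint (wordProd Z (List.ofFn α))) =
      C ∘L ContinuousLinearMap.adjoint C
    rw [Fintype.sum_unique]
    simp [wordProd, List.ofFn_zero, ContinuousLinearMap.one_def,
      ContinuousLinearMap.adjoint_id]
  have ht := Summable.tsum_eq_zero_add hsum
  calc G = S 0 + ∑' k, S (k + 1) := by rw [hGdef]; exact ht
    _ = (C ∘L ContinuousLinearMap.adjoint C) +
        ∑ i, Z i ∘L G ∘L ContinuousLinearMap.adjoint (Z i) := by
      rw [hS0, h2.tsum_eq]
    _ = (∑ i, Z i ∘L G ∘L ContinuousLinearMap.adjoint (Z i)) +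
        C ∘L ContinuousLinearMap.adjoint C := add_comm _ _
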